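/- Under the setting where R is {0,1}-valued with P(R = 1 | Z₁) = π₀(Z₁) ≥ ε > 0, R ⫫ Z₂ | Z₁, m is a bounded measurable function of Z₂, π(Z₁) is any measurable function with π(Z₁) ≥ ε > 0 (possibly misspecified), and the working model is correctly specified, h(Z₁) = E[m(Z₂) | Z₁], then E[ (R / π(Z₁)) m(Z₂) − ((R − π(Z₁)) / π(Z₁)) h(Z₁) ] = E[ m(Z₂) ]. -/

import Mathlib

open MeasureTheory ProbabilityTheory MeasurableSpace

lemma aux_condexp_mul {Ω : Type*} {m' : MeasurableSpace Ω}
    [mΩ : MeasurableSpace Ω] [StandardBorelSpace Ω] [Nonempty Ω]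
    (hm' : m' ≤ mΩ)
    (μ : Measure Ω) [IsProbabilityMeasure μ]
    (R Y : Ω → ℝ) (hR : Measurable R) (hY : Measurable Y)
    (hci : CondIndepFun m' hm' R Y μ)
    (intR : Integrable R μ) (intY : Integrable Y μ)
    (intRY : Integrable (fun ω => R ω * Y ω) μ) :
    μ[fun ω => R ω * Y ω|m'] =ᵐ[μ] fun ω => (μ[R|m']) ω * (μ[Y|m']) ω := by
  set κ := condExpKernel μ m' with hκdef
  have hae : ∀ᵐ ω ∂μ, ∀ p q : ℚ,
      κ ω (R ⁻¹' Set.Iio (p:ℝ) ∩ Y ⁻¹' Set.Iio (q:ℝ))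
        = κ ω (R ⁻¹' Set.Iio (p:ℝ)) * κ ω (Y ⁻¹' Set.Iio (q:ℝ)) := by
    apply ae_of_ae_trim hm'
    rw [ae_all_iff]
    intro p
    rw [ae_all_iff]
    intro q
    exact hci _ _ ⟨Set.Iio (p:ℝ), measurableSet_Iio, rfl⟩
      ⟨Set.Iio (q:ℝ), measurableSet_Iio, rfl⟩
  have hpiIio : IsPiSystem (⋃ a : ℚ, {Set.Iio (a:ℝ)}) := by
    rintro s hs t ht -
    simp only [Set.mem_iUnion, Set.mem_singleton_iff] at hs ht ⊢
    obtain ⟨p, rfl⟩ := hs; obtain ⟨q, rfl⟩ := ht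
    exact ⟨min p q, by rw [Set.Iio_inter_Iio]; push_cast; rfl⟩
  have hgen : ∀ (f : Ω → ℝ), MeasurableSpace.comap f inferInstance
      = MeasurableSpace.generateFrom ((f ⁻¹' ·) '' (⋃ a : ℚ, {Set.Iio (a:ℝ)})) := by
    intro f
    have : (inferInstance : MeasurableSpace ℝ) = borel ℝ := rfl
    rw [this, Real.borel_eq_generateFrom_Iio_rat, MeasurableSpace.comap_generateFrom]
  have hpic : ∀ (f : Ω → ℝ), IsPiSystem ((f ⁻¹' ·) '' (⋃ a : ℚ, {Set.Iio (a:ℝ)})) := by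
    intro f
    exact hpiIio.comap f
  have hindep : ∀ᵐ ω ∂μ, IndepFun R Y (κ ω) := by
    filter_upwards [hae] with ω hω
    exact IndepSets.indep hR.comap_le hY.comap_le (hpic R) (hpic Y) (hgen R) (hgen Y)
      (by
        rintro t1 t2 ⟨s1, hs1, rfl⟩ ⟨s2, hs2, rfl⟩
        simp only [Set.mem_iUnion, Set.mem_singleton_iff] at hs1 hs2
        obtain ⟨p, rfl⟩ := hs1; obtain ⟨q, rfl⟩ := hs2
        apply Filter.Eventually.of_forall
        intro a
        simp only [Kernel.const_apply]
        exact hω p q)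
  calc μ[fun ω => R ω * Y ω|m']
      =ᵐ[μ] fun ω => ∫ x, R x * Y x ∂(κ ω) :=
        condExp_ae_eq_integral_condExpKernel hm' intRY
    _ =ᵐ[μ] fun ω => (∫ x, R x ∂(κ ω)) * (∫ x, Y x ∂(κ ω)) := by
        filter_upwards [hindep] with ω hω
        exact IndepFun.integral_fun_mul_eq_mul_integral hω hR.aestronglyMeasurable hY.aestronglyMeasurable
    _ =ᵐ[μ] fun ω => (μ[R|m']) ω * (μ[Y|m']) ω := by
        filter_upwards [condExp_ae_eq_integral_condExpKernel hm' intR,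
          condExp_ae_eq_integral_condExpKernel hm' intY] with ω h1 h2
        rw [h1, h2]

/-- Double robustness, outcome-regression half: with correctly specified working model
`h(Z₁) = E[m(Z₂) | Z₁]`, the AIPW moment equals `E[m(Z₂)]` even for a possibly
misspecified propensity `π` bounded below by `ε > 0`. -/
theorem aipw_correct_outcome {Ω α : Type*} [MeasurableSpace Ω] [StandardBorelSpace Ω]
    [Nonempty Ω] [MeasurableSpace α] (μ : Measure Ω) [IsProbabilityMeasure μ]
    (Z₁ : Ω → α) (Z₂ : Ω → ℝ) (R : Ω → ℝ)
    (hZ₁ : Measurable Z₁) (hZ₂ : Measurable Z₂) (hR : Measurable R)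
    (hR01 : ∀ ω, R ω = 0 ∨ R ω = 1)
    (hci : CondIndepFun (MeasurableSpace.comap Z₁ inferInstance) hZ₁.comap_le R Z₂ μ)
    (π₀ : α → ℝ) (hπ₀ : Measurable π₀)
    (ε₀ : ℝ) (hε₀ : 0 < ε₀) (hπ₀ε : ∀ᵐ ω ∂μ, ε₀ ≤ π₀ (Z₁ ω))
    (hprop : μ[R | MeasurableSpace.comap Z₁ inferInstance] =ᵐ[μ] fun ω => π₀ (Z₁ ω))
    (π : α → ℝ) (hπ : Measurable π)
    (ε : ℝ) (hε : 0 < ε) (hπε : ∀ᵐ ω ∂μ, ε ≤ π (Z₁ ω))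
    (m : ℝ → ℝ) (hm : Measurable m) (M : ℝ) (hM : ∀ t, |m t| ≤ M)
    (h : α → ℝ) (hh : Measurable h)
    (hwork : μ[fun ω => m (Z₂ ω) | MeasurableSpace.comap Z₁ inferInstance]
      =ᵐ[μ] fun ω => h (Z₁ ω)) :
    ∫ ω, ((R ω / π (Z₁ ω)) * m (Z₂ ω)
        - ((R ω - π (Z₁ ω)) / π (Z₁ ω)) * h (Z₁ ω)) ∂μ
      = ∫ ω, m (Z₂ ω) ∂μ := by
  have hm'le : MeasurableSpace.comap Z₁ inferInstance ≤ (inferInstance : MeasurableSpace Ω) :=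
    hZ₁.comap_le
  have hZ₁' : Measurable[MeasurableSpace.comap Z₁ inferInstance] Z₁ :=
    Measurable.of_comap_le le_rfl
  have hM0 : 0 ≤ M := le_trans (abs_nonneg _) (hM 0)
  have hRb : ∀ ω, ‖R ω‖ ≤ 1 := by
    intro ω; rcases hR01 ω with h0 | h0 <;> simp [h0]
  have hmb : ∀ ω, ‖m (Z₂ ω)‖ ≤ M := fun ω => by
    rw [Real.norm_eq_abs]; exact hM _
  have intR : Integrable R μ :=
    (memLp_top_of_bound hR.aestronglyMeasurable 1 (ae_of_all _ hRb)).integrable le_top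
  have intm : Integrable (fun ω => m (Z₂ ω)) μ :=
    (memLp_top_of_bound (hm.comp hZ₂).aestronglyMeasurable M (ae_of_all _ hmb)).integrable le_top
  have intRm : Integrable (fun ω => R ω * m (Z₂ ω)) μ := by
    refine (memLp_top_of_bound (hR.mul (hm.comp hZ₂)).aestronglyMeasurable M
      (ae_of_all _ fun ω => ?_)).integrable le_top
    calc ‖R ω * m (Z₂ ω)‖ = ‖R ω‖ * ‖m (Z₂ ω)‖ := norm_mul _ _
      _ ≤ 1 * M := mul_le_mul (hRb ω) (hmb ω) (norm_nonneg _) zero_le_one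
      _ = M := one_mul M
  have inth : Integrable (fun ω => h (Z₁ ω)) μ := integrable_condExp.congr hwork
  have intRh : Integrable (fun ω => R ω * h (Z₁ ω)) μ :=
    inth.bdd_mul (c := 1) hR.aestronglyMeasurable (ae_of_all _ hRb)
  have inthR : Integrable (fun ω => h (Z₁ ω) * R ω) μ :=
    intRh.congr (ae_of_all _ fun ω => mul_comm _ _)
  have hsm_h : StronglyMeasurable[MeasurableSpace.comap Z₁ inferInstance]
      (fun ω => h (Z₁ ω)) := (hh.comp hZ₁').stronglyMeasurable
  -- conditional independence of R and m ∘ Z₂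
  have hci' : CondIndepFun (MeasurableSpace.comap Z₁ inferInstance) hZ₁.comap_le R
      (fun ω => m (Z₂ ω)) μ := hci.comp measurable_id hm
  have hmulcond : μ[fun ω => R ω * m (Z₂ ω)|MeasurableSpace.comap Z₁ inferInstance]
      =ᵐ[μ] fun ω => π₀ (Z₁ ω) * h (Z₁ ω) := by
    refine (aux_condexp_mul hm'le μ R (fun ω => m (Z₂ ω)) hR (hm.comp hZ₂) hci'
      intR intm intRm).trans ?_
    filter_upwards [hprop, hwork] with ω h1 h2
    rw [h1, h2]
  have h2 : μ[fun ω => R ω * h (Z₁ ω)|MeasurableSpace.comap Z₁ inferInstance]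
      =ᵐ[μ] fun ω => h (Z₁ ω) * π₀ (Z₁ ω) := by
    have e : (fun ω => R ω * h (Z₁ ω)) =ᵐ[μ] fun ω => h (Z₁ ω) * R ω :=
      ae_of_all _ fun ω => mul_comm _ _
    refine (condExp_congr_ae e).trans ?_
    refine (condExp_mul_of_stronglyMeasurable_left hsm_h inthR intR).trans ?_
    filter_upwards [hprop] with ω hp
    simp only [Pi.mul_apply, hp]
  have hzero : μ[fun ω => R ω * m (Z₂ ω) - R ω * h (Z₁ ω)|MeasurableSpace.comap Z₁ inferInstance]
      =ᵐ[μ] 0 := by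
    refine (condExp_sub intRm intRh _).trans ?_
    filter_upwards [hmulcond, h2] with ω ha hb
    simp only [Pi.sub_apply, ha, hb, Pi.zero_apply, mul_comm, sub_self]
  -- the weight function
  have hsm_w : StronglyMeasurable[MeasurableSpace.comap Z₁ inferInstance]
      (fun ω => (π (Z₁ ω))⁻¹) := ((hπ.inv).comp hZ₁').stronglyMeasurable
  have hwb : ∀ᵐ ω ∂μ, ‖(π (Z₁ ω))⁻¹‖ ≤ ε⁻¹ := by
    filter_upwards [hπε] with ω hω
    rw [Real.norm_eq_abs, abs_of_nonneg (inv_nonneg.2 (le_trans hε.le hω))]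
    gcongr
  have intf : Integrable (fun ω => R ω * m (Z₂ ω) - R ω * h (Z₁ ω)) μ := intRm.sub intRh
  have intwf : Integrable
      (fun ω => (π (Z₁ ω))⁻¹ * (R ω * m (Z₂ ω) - R ω * h (Z₁ ω))) μ :=
    intf.bdd_mul ((hπ.inv.comp hZ₁).aestronglyMeasurable) hwb
  have hwfcond : μ[fun ω => (π (Z₁ ω))⁻¹ * (R ω * m (Z₂ ω) - R ω * h (Z₁ ω))|
      MeasurableSpace.comap Z₁ inferInstance]
      =ᵐ[μ] (fun ω => (π (Z₁ ω))⁻¹) *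
        μ[fun ω => R ω * m (Z₂ ω) - R ω * h (Z₁ ω)|MeasurableSpace.comap Z₁ inferInstance] :=
    condExp_stronglyMeasurable_mul_of_bound hm'le hsm_w intf ε⁻¹ hwb
  have hintwf0 : ∫ ω, (π (Z₁ ω))⁻¹ * (R ω * m (Z₂ ω) - R ω * h (Z₁ ω)) ∂μ = 0 := by
    rw [← integral_condExp hm'le]
    have hz : μ[fun ω => (π (Z₁ ω))⁻¹ * (R ω * m (Z₂ ω) - R ω * h (Z₁ ω))|
        MeasurableSpace.comap Z₁ inferInstance] =ᵐ[μ] 0 := by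
      refine hwfcond.trans ?_
      filter_upwards [hzero] with ω h0
      simp only [Pi.mul_apply, Pi.zero_apply] at h0 ⊢
      rw [h0, mul_zero]
    rw [integral_congr_ae hz]
    simp
  have hinth : ∫ ω, h (Z₁ ω) ∂μ = ∫ ω, m (Z₂ ω) ∂μ := by
    rw [← integral_congr_ae hwork, integral_condExp hm'le]
  have hintegrand : (fun ω => (R ω / π (Z₁ ω)) * m (Z₂ ω)
        - ((R ω - π (Z₁ ω)) / π (Z₁ ω)) * h (Z₁ ω))
      =ᵐ[μ] fun ω => (π (Z₁ ω))⁻¹ * (R ω * m (Z₂ ω) - R ω * h (Z₁ ω)) + h (Z₁ ω) := by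
    filter_upwards [hπε] with ω hω
    have hne : π (Z₁ ω) ≠ 0 := (lt_of_lt_of_le hε hω).ne'
    field_simp
    ring
  rw [integral_congr_ae hintegrand, integral_add intwf inth, hintwf0, zero_add, hinth]
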